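/- Let Φ be a superoperator on L(H) with dim H = d. Then ‖Φ‖_◇ ≤ d² ‖Φ‖_{2→2} and ‖Φ‖_{2→2} ≤ √d · ‖Φ‖_◇. -/

import Mathlib

open scoped ComplexOrder

/-- The trace norm (Schatten 1-norm) of a complex matrix: the trace of `√(AᴴA)`. -/
noncomputable def traceNorm {n : Type*} [Fintype n] [DecidableEq n]
    (A : Matrix n n ℂ) : ℝ :=
  (((Matrix.posSemidef_conjTranspose_mul_self A).1.eigenvectorUnitary : Matrix n n ℂ) *
      Matrix.diagonal (((↑) : ℝ → ℂ) ∘ Real.sqrt ∘ (Matrix.posSemidef_conjTranspose_mul_self A).1.eigenvalues) *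
      (star (Matrix.posSemidef_conjTranspose_mul_self A).1.eigenvectorUnitary : Matrix n n ℂ)).trace.re

/-- The Frobenius (Hilbert–Schmidt) norm of a complex matrix. -/
noncomputable def frobNorm {n : Type*} [Fintype n] (A : Matrix n n ℂ) : ℝ :=
  Real.sqrt (∑ i, ∑ j, ‖A i j‖ ^ 2)

/-- The extension `Φ ⊗ id` of a superoperator `Φ` on `L(ℂ^n)` to `L(ℂ^n ⊗ ℂ^m)`. -/
noncomputable def extTensor {n m : Type*} [Fintype n] [Fintype m]
    (Φ : Matrix n n ℂ →ₗ[ℂ] Matrix n n ℂ) (X : Matrix (n × m) (n × m) ℂ) :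
    Matrix (n × m) (n × m) ℂ :=
  Matrix.of fun p q => Φ (Matrix.of fun i j => X (i, p.2) (j, q.2)) p.1 q.1


section Aux
open Matrix
open scoped MatrixOrder

lemma traceNorm_eq_cfc {n : Type*} [Fintype n] [DecidableEq n] (A : Matrix n n ℂ) :
    traceNorm A = (CFC.sqrt (Aᴴ * A)).trace.re := by
  have hA := Matrix.posSemidef_conjTranspose_mul_self A
  rw [CFC.sqrt_eq_cfc, cfc_nnreal_eq_real _ (Aᴴ * A), hA.1.cfc_eq]
  unfold traceNorm IsHermitian.cfc
  rw [Unitary.conjStarAlgAut_apply]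
  congr 5
  funext i
  simp [max_eq_left (hA.eigenvalues_nonneg i)]

lemma psd_sqrt {n : Type*} [Fintype n] [DecidableEq n] (A : Matrix n n ℂ) :
    (CFC.sqrt (Aᴴ * A)).PosSemidef := (CFC.sqrt_nonneg (Aᴴ * A)).posSemidef
lemma star_mul_self_re (z : ℂ) : (star z * z).re = ‖z‖ ^ 2 := by
  rw [show (star z : ℂ) = (starRingEnd ℂ) z from rfl, RCLike.conj_mul]
  simp [← Complex.ofReal_pow]

lemma frobNorm_eq_sqrt_trace {n : Type*} [Fintype n] [DecidableEq n] (A : Matrix n n ℂ) :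
    frobNorm A = Real.sqrt ((Aᴴ * A).trace.re) := by
  unfold frobNorm
  congr 1
  simp only [Matrix.trace, Matrix.diag, Matrix.mul_apply, conjTranspose_apply, Complex.re_sum,
    star_mul_self_re]
  rw [Finset.sum_comm]

lemma trace_re_eq {n : Type*} [Fintype n] [DecidableEq n] {S : Matrix n n ℂ} (hS : S.PosSemidef) :
    S.trace.re = ∑ i, hS.1.eigenvalues i := by
  have : S.trace = ∑ i, (hS.1.eigenvalues i : ℂ) := by
    conv_lhs => rw [hS.1.spectral_theorem, Unitary.conjStarAlgAut_apply]
    rw [trace_mul_comm, ← mul_assoc, (Matrix.mem_unitaryGroup_iff').mp (hS.1.eigenvectorUnitary).2,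
      one_mul]
    simp [Matrix.trace, Matrix.diag]
  simp [this, Complex.re_sum]

lemma trace_sq_re_eq {n : Type*} [Fintype n] [DecidableEq n] {S : Matrix n n ℂ}
    (hS : S.PosSemidef) : (S * S).trace.re = ∑ i, hS.1.eigenvalues i ^ 2 := by
  set U : Matrix n n ℂ := (hS.1.eigenvectorUnitary : Matrix n n ℂ) with hU
  set D : Matrix n n ℂ := diagonal (RCLike.ofReal ∘ hS.1.eigenvalues) with hD
  have h1 : star U * U = 1 := (Matrix.mem_unitaryGroup_iff').mp (hS.1.eigenvectorUnitary).2
  have key : S * S = U * (D * D) * star U := by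
    conv_lhs => rw [hS.1.spectral_theorem]
    calc U * D * star U * (U * D * star U) = U * (D * ((star U * U) * D)) * star U := by
          simp only [mul_assoc]
      _ = U * (D * D) * star U := by rw [h1, one_mul]
  have : (S * S).trace = ∑ i, (hS.1.eigenvalues i : ℂ) ^ 2 := by
    rw [key, trace_mul_comm, ← mul_assoc, h1, one_mul, hD, diagonal_mul_diagonal]
    simp [Matrix.trace, Matrix.diag, sq]
  simp [this, Complex.re_sum, ← Complex.ofReal_pow]

lemma traceNorm_eq_sum {n : Type*} [Fintype n] [DecidableEq n] (A : Matrix n n ℂ) :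
    traceNorm A = ∑ i, (psd_sqrt A).1.eigenvalues i :=
  by rw [traceNorm_eq_cfc]; exact trace_re_eq (psd_sqrt A)

lemma frobNorm_eq_sqrt_sum_sq {n : Type*} [Fintype n] [DecidableEq n] (A : Matrix n n ℂ) :
    frobNorm A = Real.sqrt (∑ i,
      (psd_sqrt A).1.eigenvalues i ^ 2) := by
  rw [frobNorm_eq_sqrt_trace]
  congr 1
  conv_lhs => rw [← CFC.sqrt_mul_sqrt_self (Aᴴ * A) (Matrix.posSemidef_conjTranspose_mul_self A).nonneg]
  exact trace_sq_re_eq (psd_sqrt A)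

lemma frobNorm_le_traceNorm {n : Type*} [Fintype n] [DecidableEq n] (A : Matrix n n ℂ) :
    frobNorm A ≤ traceNorm A := by
  rw [frobNorm_eq_sqrt_sum_sq, traceNorm_eq_sum]
  set hS := (psd_sqrt A)
  have hnn : ∀ i ∈ Finset.univ, 0 ≤ hS.1.eigenvalues i := fun i _ => hS.eigenvalues_nonneg i
  calc Real.sqrt (∑ i, hS.1.eigenvalues i ^ 2)
      ≤ Real.sqrt ((∑ i, hS.1.eigenvalues i) ^ 2) :=
        Real.sqrt_le_sqrt (Finset.sum_sq_le_sq_sum_of_nonneg hnn)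
    _ = ∑ i, hS.1.eigenvalues i := Real.sqrt_sq (Finset.sum_nonneg hnn)

lemma traceNorm_nonneg {n : Type*} [Fintype n] [DecidableEq n] (A : Matrix n n ℂ) :
    0 ≤ traceNorm A := by
  rw [traceNorm_eq_sum]
  exact Finset.sum_nonneg fun i _ =>
    (psd_sqrt A).eigenvalues_nonneg i

lemma traceNorm_le_sqrt_card_mul_frobNorm {n : Type*} [Fintype n] [DecidableEq n]
    (A : Matrix n n ℂ) :
    traceNorm A ≤ Real.sqrt (Fintype.card n) * frobNorm A := by
  rw [frobNorm_eq_sqrt_sum_sq, traceNorm_eq_sum]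
  set hS := (psd_sqrt A)
  have hnn : ∀ i ∈ Finset.univ, (0:ℝ) ≤ hS.1.eigenvalues i := fun i _ => hS.eigenvalues_nonneg i
  have h2 : (0:ℝ) ≤ ∑ i, hS.1.eigenvalues i ^ 2 :=
    Finset.sum_nonneg fun i _ => sq_nonneg _
  calc (∑ i, hS.1.eigenvalues i)
      = Real.sqrt ((∑ i, hS.1.eigenvalues i) ^ 2) := (Real.sqrt_sq (Finset.sum_nonneg hnn)).symm
    _ ≤ Real.sqrt ((Fintype.card n : ℝ) * ∑ i, hS.1.eigenvalues i ^ 2) := by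
        apply Real.sqrt_le_sqrt
        have := sq_sum_le_card_mul_sum_sq (s := (Finset.univ : Finset n))
          (f := fun i => hS.1.eigenvalues i)
        simpa using this
    _ = Real.sqrt (Fintype.card n) * Real.sqrt (∑ i, hS.1.eigenvalues i ^ 2) :=
        Real.sqrt_mul (by positivity) _

/-- Embed an `n × n` matrix as a block at position `(a,a)` in `(n × m) × (n × m)`. -/
def embed {n m : Type*} [DecidableEq m] (a : m) (A : Matrix n n ℂ) :
    Matrix (n × m) (n × m) ℂ :=
  Matrix.of fun p q => if p.2 = a ∧ q.2 = a then A p.1 q.1 else 0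

lemma embed_mul {n m : Type*} [Fintype n] [Fintype m] [DecidableEq m] (a : m)
    (A B : Matrix n n ℂ) : embed a A * embed a B = embed a (A * B) := by
  ext p q
  simp only [embed, Matrix.mul_apply, Matrix.of_apply, Fintype.sum_prod_type]
  by_cases hp : p.2 = a <;> by_cases hq : q.2 = a <;>
    simp [hp, hq, Finset.sum_ite_eq', mul_ite, ite_mul]

lemma embed_conjTranspose {n m : Type*} [DecidableEq m] (a : m) (A : Matrix n n ℂ) :
    (embed a A)ᴴ = embed a Aᴴ := by
  ext p q
  simp only [embed, conjTranspose_apply, Matrix.of_apply]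
  by_cases hp : p.2 = a <;> by_cases hq : q.2 = a <;> simp [hp, hq, And.comm]

lemma embed_posSemidef {n m : Type*} [Fintype n] [Fintype m] [DecidableEq n] [DecidableEq m]
    (a : m) {A : Matrix n n ℂ} (hA : A.PosSemidef) : (embed a A).PosSemidef := by
  have hB := (CFC.sqrt_nonneg A).posSemidef
  have hAB : A = (CFC.sqrt A)ᴴ * CFC.sqrt A := by
    rw [hB.1.eq, CFC.sqrt_mul_sqrt_self A hA.nonneg]
  rw [hAB, ← embed_mul, ← embed_conjTranspose]
  exact Matrix.posSemidef_conjTranspose_mul_self _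

lemma embed_trace {n m : Type*} [Fintype n] [Fintype m] [DecidableEq m] (a : m)
    (A : Matrix n n ℂ) : (embed a A).trace = A.trace := by
  simp only [Matrix.trace, Matrix.diag, embed, Matrix.of_apply, Fintype.sum_prod_type,
    and_self]
  rw [Finset.sum_comm]
  simp [Finset.sum_ite_eq']

lemma traceNorm_embed {n m : Type*} [Fintype n] [Fintype m] [DecidableEq n] [DecidableEq m]
    (a : m) (A : Matrix n n ℂ) : traceNorm (embed a A) = traceNorm A := by
  rw [traceNorm_eq_cfc, traceNorm_eq_cfc]
  have h1 : (embed a A)ᴴ * embed a A = embed a (Aᴴ * A) := by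
    rw [embed_conjTranspose, embed_mul]
  have hS := (psd_sqrt A)
  have h2 : embed a (CFC.sqrt (Aᴴ * A)) * embed a (CFC.sqrt (Aᴴ * A))
      = (embed a A)ᴴ * embed a A := by
    rw [embed_mul, h1, CFC.sqrt_mul_sqrt_self (Aᴴ * A) (Matrix.posSemidef_conjTranspose_mul_self A).nonneg]
  have h3 := CFC.sqrt_unique h2 (embed_posSemidef a hS).nonneg
  rw [h3, embed_trace]

lemma extTensor_embed {n m : Type*} [Fintype n] [Fintype m] [DecidableEq m]
    (Φ : Matrix n n ℂ →ₗ[ℂ] Matrix n n ℂ) (a : m) (X : Matrix n n ℂ) :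
    extTensor Φ (embed a X) = embed a (Φ X) := by
  ext p q
  simp only [extTensor, embed, Matrix.of_apply]
  by_cases h : p.2 = a ∧ q.2 = a
  · have : (Matrix.of fun i j => if p.2 = a ∧ q.2 = a then X i j else 0) = X := by
      ext i j; simp [h]
    rw [this, if_pos h]
  · have : (Matrix.of fun i j => if p.2 = a ∧ q.2 = a then X i j else 0) = 0 := by
      ext i j; simp [h]
    rw [this, if_neg h, map_zero]
    rfl

section FrobNormInstance
attribute [local instance] Matrix.frobeniusNormedAddCommGroup Matrix.frobeniusNormedSpace

variable {n : Type*} [Fintype n]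

lemma frobNorm_eq_norm (A : Matrix n n ℂ) : frobNorm A = ‖A‖ := by
  rw [frobNorm, Matrix.frobenius_norm_def, Real.sqrt_eq_rpow]
  norm_num [Real.rpow_natCast]

lemma frobNorm_nonneg (A : Matrix n n ℂ) : 0 ≤ frobNorm A := Real.sqrt_nonneg _

lemma frobNorm_zero : frobNorm (0 : Matrix n n ℂ) = 0 := by
  rw [frobNorm_eq_norm, norm_zero]

lemma frobNorm_smul (c : ℂ) (A : Matrix n n ℂ) : frobNorm (c • A) = ‖c‖ * frobNorm A := by
  rw [frobNorm_eq_norm, frobNorm_eq_norm, norm_smul]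

lemma entry_le_frobNorm (A : Matrix n n ℂ) (i j : n) : ‖A i j‖ ≤ frobNorm A := by
  rw [frobNorm, show ‖A i j‖ = Real.sqrt (‖A i j‖ ^ 2) from (Real.sqrt_sq (norm_nonneg _)).symm]
  apply Real.sqrt_le_sqrt
  calc ‖A i j‖ ^ 2 ≤ ∑ j', ‖A i j'‖ ^ 2 :=
        Finset.single_le_sum (f := fun j' => ‖A i j'‖ ^ 2)
          (fun _ _ => sq_nonneg _) (Finset.mem_univ j)
    _ ≤ ∑ i', ∑ j', ‖A i' j'‖ ^ 2 :=
        Finset.single_le_sum (f := fun i' => ∑ j', ‖A i' j'‖ ^ 2)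
          (fun _ _ => Finset.sum_nonneg fun _ _ => sq_nonneg _) (Finset.mem_univ i)

end FrobNormInstance



end Aux

/-- The diamond norm `‖Φ‖_◇ = ‖Φ ⊗ id‖_{1→1}` of a superoperator on `L(ℂ^n)`. -/
noncomputable def diamondNorm {n : Type*} [Fintype n] [DecidableEq n]
    (Φ : Matrix n n ℂ →ₗ[ℂ] Matrix n n ℂ) : ℝ :=
  ⨆ X : {X : Matrix (n × n) (n × n) ℂ // traceNorm X ≤ 1},
    traceNorm (extTensor Φ X.1)

/-- The `2→2` norm of a superoperator: operator norm w.r.t. the Frobenius norm. -/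
noncomputable def norm22 {n : Type*} [Fintype n]
    (Φ : Matrix n n ℂ →ₗ[ℂ] Matrix n n ℂ) : ℝ :=
  ⨆ X : {X : Matrix n n ℂ // frobNorm X ≤ 1}, frobNorm (Φ X.1)

section Aux2
open Matrix
section FrobNormInstance2
attribute [local instance] Matrix.frobeniusNormedAddCommGroup Matrix.frobeniusNormedSpace
variable {n : Type*} [Fintype n]
variable (Φ : Matrix n n ℂ →ₗ[ℂ] Matrix n n ℂ)

lemma norm22_bddAbove [DecidableEq n] :
    BddAbove (Set.range fun X : {X : Matrix n n ℂ // frobNorm X ≤ 1} => frobNorm (Φ X.1)) := by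
  refine ⟨∑ i : n, ∑ j : n, frobNorm (Φ (Matrix.single i j 1)), ?_⟩
  rintro _ ⟨⟨X, hX⟩, rfl⟩
  have hdecomp : X = ∑ i : n, ∑ j : n, (X i j) • Matrix.single i j 1 := by
    conv_lhs => rw [Matrix.matrix_eq_sum_single X]
    simp [Matrix.smul_single]
  have h2 : Φ X = ∑ i : n, ∑ j : n, (X i j) • Φ (Matrix.single i j 1) := by
    conv_lhs => rw [hdecomp]
    simp only [map_sum, _root_.map_smul]
  calc frobNorm (Φ X) = ‖Φ X‖ := frobNorm_eq_norm _
    _ = ‖∑ i : n, ∑ j : n, (X i j) • Φ (Matrix.single i j 1)‖ := by rw [h2]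
    _ ≤ ∑ i : n, ∑ j : n, ‖(X i j) • Φ (Matrix.single i j 1)‖ := by
        refine (norm_sum_le _ _).trans (Finset.sum_le_sum fun i _ => norm_sum_le _ _)
    _ ≤ ∑ i : n, ∑ j : n, frobNorm (Φ (Matrix.single i j 1)) := by
        refine Finset.sum_le_sum fun i _ => Finset.sum_le_sum fun j _ => ?_
        rw [norm_smul, ← frobNorm_eq_norm]
        have h1 : ‖X i j‖ ≤ 1 := (entry_le_frobNorm X i j).trans hX
        nlinarith [frobNorm_nonneg (Φ (Matrix.single i j 1))]

lemma norm22_nonneg [DecidableEq n] : 0 ≤ norm22 Φ := by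
  have := le_ciSup (norm22_bddAbove Φ) ⟨0, by rw [frobNorm_zero]; norm_num⟩
  simpa [norm22, map_zero, frobNorm_zero] using this

lemma norm22_bound [DecidableEq n] (Y : Matrix n n ℂ) :
    frobNorm (Φ Y) ≤ norm22 Φ * frobNorm Y := by
  by_cases hY : frobNorm Y = 0
  · have : Y = 0 := by
      rw [frobNorm_eq_norm] at hY; exact norm_eq_zero.mp hY
    simp [this, map_zero, frobNorm_zero, hY]
  · have hpos : 0 < frobNorm Y := lt_of_le_of_ne (frobNorm_nonneg Y) (Ne.symm hY)
    set c : ℂ := (((frobNorm Y)⁻¹ : ℝ) : ℂ) with hc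
    have hcn : ‖c‖ = (frobNorm Y)⁻¹ := by
      rw [hc, Complex.norm_real, Real.norm_eq_abs, abs_of_nonneg (by positivity)]
    have hX : frobNorm (c • Y) ≤ 1 := by
      rw [frobNorm_smul, hcn, inv_mul_cancel₀ hY]
    have h := le_ciSup (norm22_bddAbove Φ) ⟨c • Y, hX⟩
    simp only [norm22] at h ⊢
    rw [show Φ (c • Y) = c • Φ Y from map_smul Φ c Y, frobNorm_smul, hcn] at h
    calc frobNorm (Φ Y) = frobNorm Y * ((frobNorm Y)⁻¹ * frobNorm (Φ Y)) := by
          field_simp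
      _ ≤ frobNorm Y * (⨆ X : {X : Matrix n n ℂ // frobNorm X ≤ 1}, frobNorm (Φ X.1)) := by
          exact mul_le_mul_of_nonneg_left h (le_of_lt hpos)
      _ = _ := mul_comm _ _

end FrobNormInstance2
/-- shuffle equivalence -/
def shuffleEquiv (n m : Type*) : (n × m) × (n × m) ≃ (m × m) × (n × n) where
  toFun x := ((x.1.2, x.2.2), (x.1.1, x.2.1))
  invFun y := ((y.2.1, y.1.1), (y.2.2, y.1.2))
  left_inv x := rfl
  right_inv y := rfl

section Ext
attribute [local instance] Matrix.frobeniusNormedAddCommGroup Matrix.frobeniusNormedSpace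

variable {n m : Type*} [Fintype n] [Fintype m] [DecidableEq n]
variable (Φ : Matrix n n ℂ →ₗ[ℂ] Matrix n n ℂ)

lemma frob_sq (A : Matrix n n ℂ) : frobNorm A ^ 2 = ∑ i, ∑ j, ‖A i j‖ ^ 2 :=
  Real.sq_sqrt (Finset.sum_nonneg fun _ _ => Finset.sum_nonneg fun _ _ => sq_nonneg _)

lemma frob_extTensor_le (X : Matrix (n × m) (n × m) ℂ) :
    frobNorm (extTensor Φ X) ≤ norm22 Φ * frobNorm X := by
  have hC := norm22_nonneg Φ
  set C := norm22 Φ with hCdef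
  have hsum : ∀ (f : (n × m) × (n × m) → ℝ),
      ∑ p : n × m, ∑ q : n × m, f (p, q)
        = ∑ b : m, ∑ c : m, ∑ i : n, ∑ j : n, f ((i, b), (j, c)) := by
    intro f
    rw [← Fintype.sum_prod_type]
    rw [← Fintype.sum_equiv (shuffleEquiv n m).symm (fun y => f ((shuffleEquiv n m).symm y))
      (fun x => f x) (fun y => rfl)]
    simp [Fintype.sum_prod_type, shuffleEquiv]
  have key : (∑ p : n × m, ∑ q : n × m, ‖extTensor Φ X p q‖ ^ 2)
      ≤ C ^ 2 * ∑ p : n × m, ∑ q : n × m, ‖X p q‖ ^ 2 := by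
    rw [hsum fun pq => ‖extTensor Φ X pq.1 pq.2‖ ^ 2, hsum fun pq => ‖X pq.1 pq.2‖ ^ 2]
    rw [Finset.mul_sum]
    refine Finset.sum_le_sum fun b _ => ?_
    rw [Finset.mul_sum]
    refine Finset.sum_le_sum fun c _ => ?_
    set Y : Matrix n n ℂ := Matrix.of fun i j => X (i, b) (j, c) with hY
    have h1 : ∑ i : n, ∑ j : n, ‖extTensor Φ X ((i, b), (j, c)).1 ((i, b), (j, c)).2‖ ^ 2
        = frobNorm (Φ Y) ^ 2 := by
      rw [frob_sq]; rfl
    have h2 : ∑ i : n, ∑ j : n, ‖X ((i, b), (j, c)).1 ((i, b), (j, c)).2‖ ^ 2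
        = frobNorm Y ^ 2 := by
      rw [frob_sq]; rfl
    rw [h1, h2]
    have := norm22_bound Φ Y
    nlinarith [frobNorm_nonneg (Φ Y), frobNorm_nonneg Y]
  calc frobNorm (extTensor Φ X)
      = Real.sqrt (∑ p : n × m, ∑ q : n × m, ‖extTensor Φ X p q‖ ^ 2) := rfl
    _ ≤ Real.sqrt (C ^ 2 * ∑ p : n × m, ∑ q : n × m, ‖X p q‖ ^ 2) := Real.sqrt_le_sqrt key
    _ = C * frobNorm X := by
        rw [Real.sqrt_mul (sq_nonneg _), Real.sqrt_sq hC]; rfl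

end Ext

section Main
variable {n : Type*} [Fintype n] [DecidableEq n] (Φ : Matrix n n ℂ →ₗ[ℂ] Matrix n n ℂ)

lemma diamond_pointwise (X : {X : Matrix (n × n) (n × n) ℂ // traceNorm X ≤ 1}) :
    traceNorm (extTensor Φ X.1) ≤ (Fintype.card n : ℝ) * norm22 Φ := by
  obtain ⟨X, hX⟩ := X
  have hC := norm22_nonneg Φ
  have hd : (0:ℝ) ≤ (Fintype.card n : ℝ) := Nat.cast_nonneg _
  have h1 := traceNorm_le_sqrt_card_mul_frobNorm (extTensor Φ X)
  have hcard : Real.sqrt (Fintype.card (n × n)) = (Fintype.card n : ℝ) := by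
    rw [Fintype.card_prod]
    push_cast
    rw [Real.sqrt_mul_self hd]
  rw [hcard] at h1
  have h2 : frobNorm (extTensor Φ X) ≤ norm22 Φ * frobNorm X := frob_extTensor_le Φ X
  have h3 : frobNorm X ≤ 1 := (frobNorm_le_traceNorm X).trans hX
  have h4 : frobNorm (extTensor Φ X) ≤ norm22 Φ := by
    nlinarith [frobNorm_nonneg X]
  nlinarith

lemma diamond_bddAbove :
    BddAbove (Set.range fun X : {X : Matrix (n × n) (n × n) ℂ // traceNorm X ≤ 1} =>
      traceNorm (extTensor Φ X.1)) := by
  refine ⟨(Fintype.card n : ℝ) * norm22 Φ, ?_⟩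
  rintro _ ⟨Z, rfl⟩
  exact diamond_pointwise Φ Z

lemma traceNorm_zero_le_one : traceNorm (0 : Matrix (n × n) (n × n) ℂ) ≤ 1 := by
  have := traceNorm_le_sqrt_card_mul_frobNorm (0 : Matrix (n × n) (n × n) ℂ)
  rw [frobNorm_zero, mul_zero] at this
  linarith [traceNorm_nonneg (0 : Matrix (n × n) (n × n) ℂ)]

lemma diamond_nonneg : 0 ≤ diamondNorm Φ := by
  have h := le_ciSup (diamond_bddAbove Φ) ⟨0, traceNorm_zero_le_one⟩
  exact (traceNorm_nonneg _).trans h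

end Main

end Aux2

/-- For a superoperator `Φ` on `L(H)` with `dim H = d`:
`‖Φ‖_◇ ≤ d²·‖Φ‖_{2→2}` and `‖Φ‖_{2→2} ≤ √d·‖Φ‖_◇`. -/
theorem stmt_12 {n : Type*} [Fintype n] [DecidableEq n]
    (Φ : Matrix n n ℂ →ₗ[ℂ] Matrix n n ℂ) :
    diamondNorm Φ ≤ (Fintype.card n : ℝ) ^ 2 * norm22 Φ ∧
      norm22 Φ ≤ Real.sqrt (Fintype.card n) * diamondNorm Φ := by
  have hC := norm22_nonneg Φ
  have hd : (0:ℝ) ≤ (Fintype.card n : ℝ) := Nat.cast_nonneg _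
  constructor
  · have hne : Nonempty {X : Matrix (n × n) (n × n) ℂ // traceNorm X ≤ 1} :=
      ⟨⟨0, traceNorm_zero_le_one⟩⟩
    refine (ciSup_le (diamond_pointwise Φ)).trans ?_
    have hdd : (Fintype.card n : ℝ) ≤ (Fintype.card n : ℝ) ^ 2 := by
      exact_mod_cast Nat.le_self_pow two_ne_zero (Fintype.card n)
    nlinarith
  · haveI : Nonempty {X : Matrix n n ℂ // frobNorm X ≤ 1} :=
      ⟨⟨0, by rw [frobNorm_zero]; norm_num⟩⟩
    refine ciSup_le ?_
    rintro ⟨X, hX⟩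
    by_cases hne : Nonempty n
    · haveI := hne
      obtain ⟨a⟩ := hne
      have hd1 : (1:ℝ) ≤ (Fintype.card n : ℝ) := by
        exact_mod_cast Fintype.card_pos (α := n)
      have hsd : 0 < Real.sqrt (Fintype.card n : ℝ) := Real.sqrt_pos.mpr (by linarith)
      have hcn : ‖((((Real.sqrt (Fintype.card n : ℝ))⁻¹ : ℝ) : ℂ))‖
          = (Real.sqrt (Fintype.card n : ℝ))⁻¹ := by
        rw [Complex.norm_real, Real.norm_eq_abs, abs_of_nonneg (by positivity)]
      have hfX' : frobNorm (((((Real.sqrt (Fintype.card n : ℝ))⁻¹ : ℝ) : ℂ)) • X)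
          = (Real.sqrt (Fintype.card n : ℝ))⁻¹ * frobNorm X := by
        rw [frobNorm_smul, hcn]
      have hY : traceNorm (embed a (((((Real.sqrt (Fintype.card n : ℝ))⁻¹ : ℝ) : ℂ)) • X))
          ≤ 1 := by
        rw [traceNorm_embed]
        calc traceNorm (((((Real.sqrt (Fintype.card n : ℝ))⁻¹ : ℝ) : ℂ)) • X)
            ≤ Real.sqrt (Fintype.card n : ℝ)
              * frobNorm (((((Real.sqrt (Fintype.card n : ℝ))⁻¹ : ℝ) : ℂ)) • X) :=
              traceNorm_le_sqrt_card_mul_frobNorm _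
          _ = frobNorm X := by rw [hfX']; field_simp
          _ ≤ 1 := hX
      have hdia : traceNorm (extTensor Φ
            (embed a (((((Real.sqrt (Fintype.card n : ℝ))⁻¹ : ℝ) : ℂ)) • X)))
          ≤ diamondNorm Φ :=
        le_ciSup (diamond_bddAbove Φ) ⟨_, hY⟩
      rw [extTensor_embed, traceNorm_embed,
        map_smul Φ ((((Real.sqrt (Fintype.card n : ℝ))⁻¹ : ℝ) : ℂ)) X] at hdia
      have h5 : frobNorm (((((Real.sqrt (Fintype.card n : ℝ))⁻¹ : ℝ) : ℂ)) • Φ X)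
          ≤ traceNorm (((((Real.sqrt (Fintype.card n : ℝ))⁻¹ : ℝ) : ℂ)) • Φ X) :=
        frobNorm_le_traceNorm _
      rw [frobNorm_smul, hcn] at h5
      have h7 : (Real.sqrt (Fintype.card n : ℝ))⁻¹ * frobNorm (Φ X) ≤ diamondNorm Φ :=
        h5.trans hdia
      calc frobNorm (Φ X)
          = Real.sqrt (Fintype.card n : ℝ)
            * ((Real.sqrt (Fintype.card n : ℝ))⁻¹ * frobNorm (Φ X)) := by field_simp
        _ ≤ Real.sqrt (Fintype.card n : ℝ) * diamondNorm Φ :=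
            mul_le_mul_of_nonneg_left h7 hsd.le
    · have : IsEmpty n := not_nonempty_iff.mp hne
      have hzero : frobNorm (Φ X) = 0 := by
        rw [frobNorm]
        simp
      rw [hzero]
      exact mul_nonneg (Real.sqrt_nonneg _) (diamond_nonneg Φ)
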